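/- (Macdonald/Mehta integral for B_n at γ = 1) (2π)^{-n/2} ∫_{ℝ^n} ∏_{i=1}^n (2x_i²) · ∏_{1≤i<j≤n} (x_i² - x_j²)² · exp(-∑_{k=1}^n x_k²/2) dx = ∏_{j=1}^n (2j)! . -/

import Mathlib

open Finset Real MeasureTheory
open Polynomial

noncomputable section

namespace MehtaB

/-- Real Hermite polynomial. -/
def HR (n : ℕ) : ℝ[X] := (Polynomial.hermite n).map (Int.castRingHom ℝ)

lemma HR_monic (n : ℕ) : (HR n).Monic := (hermite_monic n).map _

lemma HR_ne_zero (n : ℕ) : HR n ≠ 0 := (HR_monic n).ne_zero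

lemma HR_natDegree (n : ℕ) : (HR n).natDegree = n := by
  rw [HR, natDegree_map_eq_of_injective (Int.cast_injective), natDegree_hermite]

lemma aeval_hermite_eq (n : ℕ) (x : ℝ) : aeval x (hermite n) = (HR n).eval x := by
  rw [HR, eval_map, aeval_def]; rfl

lemma derivative_hermite (n : ℕ) :
    derivative (hermite (n + 1)) = C ((n : ℤ) + 1) * hermite n := by
  induction n with
  | zero => simp [hermite_one, hermite_zero]
  | succ n ih =>
    rw [hermite_succ (n+1), derivative_sub, derivative_mul, derivative_X, one_mul, ih,
      derivative_mul, derivative_C, zero_mul, hermite_succ]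
    simp only [Nat.cast_add, Nat.cast_one, C_add, C_1]
    ring

lemma HR_succ_succ (n : ℕ) :
    HR (n + 2) = X * HR (n + 1) - C ((n : ℝ) + 1) * HR n := by
  have h := hermite_succ (n + 1)
  rw [derivative_hermite] at h
  have := congrArg (fun p => p.map (Int.castRingHom ℝ)) h
  simpa [HR, Polynomial.map_mul, Polynomial.map_sub] using this

lemma HR_zero : HR 0 = 1 := by simp [HR, hermite_zero]
lemma HR_one : HR 1 = X := by simp [HR, hermite_one]

/-- `(qr k).1` is the even part polynomial, `(qr k).2` the odd one:
`He_{2k} = r_k(X²)`, `He_{2k+1} = X · q_k(X²)`. -/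
def qr : ℕ → ℝ[X] × ℝ[X]
  | 0 => (1, 1)
  | (k+1) =>
      (X * (qr k).2 - C (2*(k:ℝ)+1) * (qr k).1,
       X * (qr k).2 - C (2*(k:ℝ)+1) * (qr k).1 - C (2*(k:ℝ)+2) * (qr k).2)

def Q (k : ℕ) : ℝ[X] := (qr k).2

lemma HR_comp (k : ℕ) :
    HR (2*k) = (qr k).1.comp (X^2) ∧ HR (2*k+1) = X * ((qr k).2.comp (X^2)) := by
  induction k with
  | zero => simp [qr, HR_zero, HR_one]
  | succ k ih =>
    obtain ⟨ih1, ih2⟩ := ih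
    have e1 : HR (2*(k+1)) = X * HR (2*k+1) - C (2*(k:ℝ)+1) * HR (2*k) := by
      have := HR_succ_succ (2*k)
      convert this using 2 <;> push_cast <;> ring_nf
    have e2 : HR (2*(k+1)+1) = X * HR (2*(k+1)) - C (2*(k:ℝ)+2) * HR (2*k+1) := by
      have := HR_succ_succ (2*k+1)
      convert this using 2 <;> push_cast <;> ring_nf
    constructor
    · rw [e1, ih1, ih2, qr]
      simp only [sub_comp, mul_comp, X_comp, C_comp]
      ring
    · rw [e2, e1, ih1, ih2]
      show _ = X * ((qr (k+1)).2.comp (X^2))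
      rw [qr]
      simp only [sub_comp, mul_comp, X_comp, C_comp]
      ring

lemma HR_odd_eval (k : ℕ) (y : ℝ) :
    (HR (2*k+1)).eval y = y * (Q k).eval (y^2) := by
  rw [(HR_comp k).2]
  simp [Q, eval_comp]

lemma Q_natDegree (k : ℕ) : (Q k).natDegree = k := by
  have h : HR (2*k+1) = X * (Q k).comp (X^2) := (HR_comp k).2
  have hne : (Q k).comp (X^2) ≠ 0 := by
    intro h0
    apply HR_ne_zero (2*k+1)
    rw [h, h0, mul_zero]
  have hd : (2*k+1) = 1 + (Q k).natDegree * 2 := by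
    have := HR_natDegree (2*k+1)
    rw [h] at this
    rw [natDegree_mul X_ne_zero hne, natDegree_X, natDegree_comp, natDegree_X_pow] at this
    omega
  omega

lemma Q_monic (k : ℕ) : (Q k).Monic := by
  have h : HR (2*k+1) = X * (Q k).comp (X^2) := (HR_comp k).2
  have hm := HR_monic (2*k+1)
  rw [h] at hm
  unfold Polynomial.Monic at hm ⊢
  have hX2 : ((X:ℝ[X])^2).natDegree ≠ 0 := by simp
  have : leadingCoeff (X * (Q k).comp (X^2)) =
      leadingCoeff X * leadingCoeff ((Q k).comp (X^2)) := leadingCoeff_mul _ _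
  rw [this, leadingCoeff_X, one_mul, leadingCoeff_comp hX2] at hm
  simpa [leadingCoeff_X_pow] using hm


/-! ### Gaussian analysis -/

def g : ℝ → ℝ := fun y => Real.exp (-(y ^ 2 / 2))

lemma g_eq (x : ℝ) : g x = Real.exp (-(1/2) * x^2) := by unfold g; ring_nf

lemma deriv_iter_g (b : ℕ) (x : ℝ) :
    deriv^[b] g x = ((-1:ℝ)^b * (HR b).eval x) * g x := by
  have h := Polynomial.deriv_gaussian_eq_hermite_mul_gaussian b x
  rw [aeval_hermite_eq] at h
  unfold g
  simpa [mul_assoc] using h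

lemma integrable_xpow_gaussian (k : ℕ) : Integrable (fun x : ℝ => x ^ k * g x) := by
  have base : Integrable (fun x : ℝ => x ^ ((k:ℝ)) * Real.exp (-(1/2) * x^2)) :=
    integrable_rpow_mul_exp_neg_mul_sq (b := 1/2) (s := (k:ℝ)) (by norm_num)
      (by have : (0:ℝ) ≤ k := Nat.cast_nonneg k; linarith)
  rw [show (fun x:ℝ => x ^ k * g x) = fun x => x ^ ((k:ℝ)) * Real.exp (-(1/2)*x^2) from
    funext fun x => by rw [Real.rpow_natCast, g_eq]]
  exact base

lemma integrable_poly_gaussian (P : ℝ[X]) : Integrable (fun x => P.eval x * g x) := by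
  have hfe : (fun x => P.eval x * g x)
      = fun x => ∑ k ∈ range (P.natDegree + 1), P.coeff k * (x ^ k * g x) := by
    funext x
    rw [Polynomial.eval_eq_sum_range, Finset.sum_mul]
    exact Finset.sum_congr rfl fun k _ => by ring
  rw [hfe]
  exact integrable_finset_sum _ fun k _ => (integrable_xpow_gaussian k).const_mul _

lemma integrable_poly_derivIter (P : ℝ[X]) (b : ℕ) :
    Integrable (fun x => P.eval x * deriv^[b] g x) := by
  have hfe : (fun x => P.eval x * deriv^[b] g x)
      = fun x => ((C ((-1:ℝ)^b) * HR b) * P).eval x * g x := by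
    funext x; rw [deriv_iter_g]; simp only [eval_mul, eval_C]; ring
  rw [hfe]; exact integrable_poly_gaussian _

lemma ibp_iter (b : ℕ) : ∀ P : ℝ[X],
    ∫ x, P.eval x * deriv^[b] g x = (-1:ℝ)^b * ∫ x, (derivative^[b] P).eval x * g x := by
  induction b with
  | zero => intro P; simp
  | succ b ih =>
    intro P
    have hv : ∀ x : ℝ, HasDerivAt (deriv^[b] g) (deriv^[b+1] g x) x := by
      have hfun : deriv^[b] g = fun x => ((-1:ℝ)^b * (HR b).eval x) * g x :=
        funext (deriv_iter_g b)
      have hdiff : Differentiable ℝ (deriv^[b] g) := by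
        rw [hfun]
        exact ((differentiable_const _).mul (Polynomial.differentiable _)).mul
          (Differentiable.exp (by fun_prop))
      intro x
      have hx : deriv^[b+1] g x = deriv (deriv^[b] g) x := by
        rw [Function.iterate_succ_apply']
      rw [hx]
      exact (hdiff x).hasDerivAt
    have hu : ∀ x : ℝ, HasDerivAt (fun y => P.eval y) ((derivative P).eval x) x :=
      fun x => P.hasDerivAt x
    have h := integral_mul_deriv_eq_deriv_mul_of_integrable (fun x _ => hu x) (fun x _ => hv x)
      (by simpa [Pi.mul_def] using integrable_poly_derivIter P (b+1))
      (by simpa [Pi.mul_def] using integrable_poly_derivIter (derivative P) b)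
      (by simpa [Pi.mul_def] using integrable_poly_derivIter P b)
    calc ∫ x, P.eval x * deriv^[b+1] g x
        = - ∫ x, (derivative P).eval x * deriv^[b] g x := h
      _ = - ((-1:ℝ)^b * ∫ x, (derivative^[b] (derivative P)).eval x * g x) := by
          rw [ih (derivative P)]
      _ = (-1:ℝ)^(b+1) * ∫ x, (derivative^[b+1] P).eval x * g x := by
          rw [Function.iterate_succ_apply]
          ring

lemma integral_g : ∫ x, g x = Real.sqrt (2*π) := by
  have hfe : (fun x => g x) = fun x => Real.exp (-(1/2) * x^2) := funext g_eq
  rw [show (∫ x, g x) = ∫ x, Real.exp (-(1/2) * x^2) from by rw [← hfe],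
    integral_gaussian, show π / (1/2:ℝ) = 2*π from by ring]

lemma iterate_derivative_monic {P : ℝ[X]} {a : ℕ} (hd : P.natDegree = a) (hm : P.Monic) :
    derivative^[a] P = C (a.factorial : ℝ) := by
  have hdeg : (derivative^[a] P).natDegree ≤ 0 := by
    have h := P.natDegree_iterate_derivative a
    omega
  rw [eq_C_of_natDegree_le_zero hdeg, coeff_iterate_derivative]
  have hc : P.coeff (0 + a) = 1 := by
    rw [zero_add, ← hd]; exact hm.coeff_natDegree
  rw [hc, zero_add, Nat.descFactorial_self]
  simp

lemma hermite_orth_aux (a b : ℕ) :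
    ∫ x, (HR a).eval x * (HR b).eval x * g x
      = ∫ x, (derivative^[b] (HR a)).eval x * g x := by
  have hfe : (fun x => (HR a).eval x * (HR b).eval x * g x)
      = fun x => (-1:ℝ)^b * ((HR a).eval x * deriv^[b] g x) := by
    funext x
    rw [deriv_iter_g]
    rw [show ((-1:ℝ)^b * ((HR a).eval x * ((-1:ℝ)^b * (HR b).eval x * g x)))
      = ((-1:ℝ)^b * (-1:ℝ)^b) * ((HR a).eval x * ((HR b).eval x * g x)) from by ring,
      ← pow_add, Even.neg_one_pow ⟨b, by ring⟩]
    ring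
  rw [hfe, integral_const_mul, ibp_iter, ← mul_assoc, ← pow_add,
    Even.neg_one_pow ⟨b, by ring⟩, one_mul]

lemma hermite_orth (a b : ℕ) :
    ∫ x, (HR a).eval x * (HR b).eval x * g x
      = if a = b then (a.factorial : ℝ) * Real.sqrt (2*π) else 0 := by
  rcases lt_trichotomy a b with h | h | h
  · rw [if_neg h.ne, hermite_orth_aux,
      Polynomial.iterate_derivative_eq_zero (by rw [HR_natDegree]; exact h)]
    simp
  · subst h
    rw [if_pos rfl, hermite_orth_aux, iterate_derivative_monic (HR_natDegree a) (HR_monic a)]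
    simp only [eval_C]
    rw [integral_const_mul, integral_g]
  · rw [if_neg h.ne', show (fun x => (HR a).eval x * (HR b).eval x * g x)
      = fun x => (HR b).eval x * (HR a).eval x * g x from by funext x; ring,
      hermite_orth_aux,
      Polynomial.iterate_derivative_eq_zero (by rw [HR_natDegree]; exact h)]
    simp


def hb (a b : ℕ) (y : ℝ) : ℝ := 2 * (HR (2*a+1)).eval y * (HR (2*b+1)).eval y * g y

lemma hb_integrable (a b : ℕ) : Integrable (hb a b) := by
  have hfe : hb a b = fun y => ((C 2) * HR (2*a+1) * HR (2*b+1)).eval y * g y := by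
    funext y; simp only [hb, eval_mul, eval_C]; try ring
  rw [hfe]; exact integrable_poly_gaussian _

lemma hb_integral (a b : ℕ) :
    ∫ y, hb a b y = if a = b then 2*((2*a+1).factorial : ℝ) * Real.sqrt (2*π) else 0 := by
  have hfe : hb a b = fun y => 2 * ((HR (2*a+1)).eval y * (HR (2*b+1)).eval y * g y) := by
    funext y; simp only [hb]; ring
  rw [hfe, integral_const_mul, hermite_orth]
  rcases eq_or_ne a b with h | h
  · subst h; simp; ring
  · rw [if_neg (show ¬(2*a+1 = 2*b+1) by omega), if_neg h, mul_zero]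

lemma prod_pairs {n : ℕ} (f : Fin n → Fin n → ℝ) :
    ∏ p ∈ univ.filter (fun p : Fin n × Fin n => p.1 < p.2), f p.1 p.2
      = ∏ i, ∏ j ∈ Ioi i, f i j := by
  rw [Finset.prod_sigma']
  refine Finset.prod_bij' (fun p _ => ⟨p.1, p.2⟩) (fun q _ => (q.1, q.2)) ?_ ?_ ?_ ?_ ?_ <;>
    simp [Finset.mem_sigma, Finset.mem_filter, Finset.mem_Ioi]

lemma fact_prod_eq (n : ℕ) :
    n.factorial * ∏ k ∈ range n, (2*(2*k+1).factorial) = ∏ k ∈ range n, (2*(k+1)).factorial := by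
  induction n with
  | zero => simp
  | succ n ih =>
    rw [Finset.prod_range_succ, Finset.prod_range_succ, Nat.factorial_succ n,
      show 2*(n+1) = (2*n+1)+1 by ring, Nat.factorial_succ (2*n+1), ← ih]
    ring

end MehtaB

set_option maxHeartbeats 2000000 in
open MehtaB Equiv in
/-- Macdonald/Mehta integral for the root system `B_n` at `γ = 1`:
`(2π)^{-n/2} ∫_{ℝⁿ} ∏_i (2x_i²) ∏_{i<j} (x_i² - x_j²)² e^{-∑ x_k²/2} dx = ∏_{j=1}^n (2j)!`. -/
theorem macdonald_mehta_Bn_gamma_one (n : ℕ) :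
    (2 * π) ^ (-(n : ℝ) / 2) *
      ∫ x : Fin n → ℝ,
        (∏ i, 2 * (x i) ^ 2) *
        (∏ p ∈ univ.filter (fun p : Fin n × Fin n => p.1 < p.2),
          ((x p.1) ^ 2 - (x p.2) ^ 2) ^ 2) *
        Real.exp (-(∑ k, (x k) ^ 2) / 2)
    = ∏ j ∈ range n, ((2 * (j + 1)).factorial : ℝ) := by
  classical
  have sgn2 : ∀ σ : Perm (Fin n),
      ((Perm.sign σ : ℤ) : ℝ) * ((Perm.sign σ : ℤ) : ℝ) = 1 := by
    intro σ; rcases Int.units_eq_one_or (Perm.sign σ) with h | h <;> simp [h]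
  have key : ∀ x : Fin n → ℝ,
      (∏ i, 2 * (x i) ^ 2) *
        (∏ p ∈ univ.filter (fun p : Fin n × Fin n => p.1 < p.2),
          ((x p.1) ^ 2 - (x p.2) ^ 2) ^ 2) *
        Real.exp (-(∑ k, (x k) ^ 2) / 2)
      = ∑ q : Perm (Fin n) × Perm (Fin n),
          (((Perm.sign q.1 : ℤ) : ℝ) * ((Perm.sign q.2 : ℤ) : ℝ)) *
            ∏ i, hb (q.1 i : ℕ) (q.2 i : ℕ) (x i) := by
    intro x
    have hdet2 : Matrix.det (Matrix.vandermonde (fun i : Fin n => (x i)^2))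
        = ∑ σ : Perm (Fin n), ((Perm.sign σ : ℤ) : ℝ) *
            ∏ i, (Q (σ i : ℕ)).eval ((x i)^2) := by
      rw [Matrix.det_eval_matrixOfPolynomials_eq_det_vandermonde (fun i : Fin n => (x i)^2)
            (fun j => Q (j : ℕ)) (fun i => Q_natDegree _) (fun i => Q_monic _),
          ← Matrix.det_transpose, Matrix.det_apply']
      refine Finset.sum_congr rfl fun σ _ => ?_
      simp [Matrix.transpose_apply]
    have hdet : (∏ p ∈ univ.filter (fun p : Fin n × Fin n => p.1 < p.2),
          ((x p.1)^2 - (x p.2)^2)^2)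
        = (Matrix.det (Matrix.vandermonde (fun i : Fin n => (x i)^2)))^2 := by
      rw [Matrix.det_vandermonde, ← Finset.prod_pow,
        prod_pairs (fun i j => ((x i)^2 - (x j)^2)^2)]
      refine Finset.prod_congr rfl fun i _ => ?_
      rw [← Finset.prod_pow]
      exact Finset.prod_congr rfl fun j _ => by ring
    have hexp : Real.exp (-(∑ k, (x k)^2)/2) = ∏ i, g (x i) := by
      rw [show -(∑ k, (x k)^2)/2 = ∑ k, -((x k)^2/2) from by
          rw [Finset.sum_neg_distrib, ← Finset.sum_div, neg_div],
        Real.exp_sum]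
      rfl
    have hprod : ∀ σ τ : Perm (Fin n),
        (∏ i, 2 * (x i)^2) * ((∏ i, (Q (σ i : ℕ)).eval ((x i)^2)) *
          (∏ i, (Q (τ i : ℕ)).eval ((x i)^2))) * (∏ i, g (x i))
        = ∏ i, hb (σ i : ℕ) (τ i : ℕ) (x i) := by
      intro σ τ
      rw [← Finset.prod_mul_distrib, ← Finset.prod_mul_distrib, ← Finset.prod_mul_distrib]
      refine Finset.prod_congr rfl fun i _ => ?_
      simp only [hb]
      rw [HR_odd_eval, HR_odd_eval]
      ring
    rw [hdet, sq, hdet2, hexp, Fintype.sum_prod_type, Finset.sum_mul_sum]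
    simp only [Finset.mul_sum, Finset.sum_mul]
    refine Finset.sum_congr rfl fun σ _ => Finset.sum_congr rfl fun τ _ => ?_
    rw [← hprod σ τ]
    ring
  have h1 : (∫ x : Fin n → ℝ,
        (∏ i, 2 * (x i) ^ 2) *
        (∏ p ∈ univ.filter (fun p : Fin n × Fin n => p.1 < p.2),
          ((x p.1) ^ 2 - (x p.2) ^ 2) ^ 2) *
        Real.exp (-(∑ k, (x k) ^ 2) / 2))
      = ∑ q : Perm (Fin n) × Perm (Fin n),
          (((Perm.sign q.1 : ℤ) : ℝ) * ((Perm.sign q.2 : ℤ) : ℝ)) *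
            ∏ i, ∫ y, hb (q.1 i : ℕ) (q.2 i : ℕ) y := by
    rw [show (fun x : Fin n → ℝ =>
        (∏ i, 2 * (x i) ^ 2) *
        (∏ p ∈ univ.filter (fun p : Fin n × Fin n => p.1 < p.2),
          ((x p.1) ^ 2 - (x p.2) ^ 2) ^ 2) *
        Real.exp (-(∑ k, (x k) ^ 2) / 2))
      = fun x => ∑ q : Perm (Fin n) × Perm (Fin n),
          (((Perm.sign q.1 : ℤ) : ℝ) * ((Perm.sign q.2 : ℤ) : ℝ)) *
            ∏ i, hb (q.1 i : ℕ) (q.2 i : ℕ) (x i) from funext key]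
    have hint : ∀ q : Perm (Fin n) × Perm (Fin n),
        Integrable (fun x : Fin n → ℝ =>
          (((Perm.sign q.1 : ℤ) : ℝ) * ((Perm.sign q.2 : ℤ) : ℝ)) *
            ∏ i, hb (q.1 i : ℕ) (q.2 i : ℕ) (x i)) := by
      intro q
      have h := MeasureTheory.Integrable.fintype_prod (ι := Fin n)
        (f := fun i y => hb (q.1 i : ℕ) (q.2 i : ℕ) y) (fun i => hb_integrable _ _)
      exact h.const_mul _
    rw [integral_finset_sum _ (fun q _ => hint q)]
    refine Finset.sum_congr rfl fun q _ => ?_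
    rw [integral_const_mul,
      MeasureTheory.integral_fintype_prod_volume_eq_prod (ι := Fin n)
        (fun i y => hb (q.1 i : ℕ) (q.2 i : ℕ) y)]
  have h2 : ∀ q : Perm (Fin n) × Perm (Fin n),
      (∏ i, ∫ y, hb (q.1 i : ℕ) (q.2 i : ℕ) y)
        = if q.1 = q.2 then
            (Real.sqrt (2*π))^n * ∏ j : Fin n, (2*((2*(j:ℕ)+1).factorial : ℝ)) else 0 := by
    intro q
    rcases eq_or_ne q.1 q.2 with h | h
    · rw [if_pos h, ← h]
      have e1 : ∀ i : Fin n, (∫ y, hb (q.1 i : ℕ) (q.1 i : ℕ) y)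
          = 2*((2*(q.1 i : ℕ)+1).factorial : ℝ) * Real.sqrt (2*π) := fun i => by
        rw [hb_integral, if_pos rfl]
      rw [Finset.prod_congr rfl (fun i _ => e1 i)]
      rw [Equiv.prod_comp q.1 (fun j : Fin n => 2*((2*(j:ℕ)+1).factorial : ℝ) * Real.sqrt (2*π)),
        Finset.prod_mul_distrib, Finset.prod_const, Finset.card_univ, Fintype.card_fin]
      ring
    · rw [if_neg h]
      obtain ⟨i, hi⟩ : ∃ i, q.1 i ≠ q.2 i := by
        by_contra hc; push_neg at hc; exact h (Equiv.ext hc)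
      refine Finset.prod_eq_zero (Finset.mem_univ i) ?_
      rw [hb_integral, if_neg (fun hc => hi (Fin.val_injective hc))]
  have h3 : (∑ q : Perm (Fin n) × Perm (Fin n),
        (((Perm.sign q.1 : ℤ) : ℝ) * ((Perm.sign q.2 : ℤ) : ℝ)) *
          (if q.1 = q.2 then
            (Real.sqrt (2*π))^n * ∏ j : Fin n, (2*((2*(j:ℕ)+1).factorial : ℝ)) else 0))
      = (n.factorial : ℝ) *
          ((Real.sqrt (2*π))^n * ∏ j : Fin n, (2*((2*(j:ℕ)+1).factorial : ℝ))) := by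
    rw [Fintype.sum_prod_type]
    have hin : ∀ σ : Perm (Fin n),
        (∑ τ : Perm (Fin n), (((Perm.sign σ : ℤ) : ℝ) * ((Perm.sign τ : ℤ) : ℝ)) *
          (if σ = τ then
            (Real.sqrt (2*π))^n * ∏ j : Fin n, (2*((2*(j:ℕ)+1).factorial : ℝ)) else 0))
        = (Real.sqrt (2*π))^n * ∏ j : Fin n, (2*((2*(j:ℕ)+1).factorial : ℝ)) := by
      intro σ
      rw [Finset.sum_eq_single σ]
      · rw [if_pos rfl, sgn2, one_mul]
      · intro τ _ hτ
        rw [if_neg (fun e => hτ e.symm), mul_zero]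
      · intro hs; exact absurd (Finset.mem_univ σ) hs
    rw [Finset.sum_congr rfl (fun σ _ => hin σ), Finset.sum_const, Finset.card_univ,
      Fintype.card_perm, Fintype.card_fin, nsmul_eq_mul]
  have hpow : (2 * π : ℝ) ^ (-(n:ℝ)/2) * (Real.sqrt (2*π))^n = 1 := by
    rw [Real.sqrt_eq_rpow, ← Real.rpow_natCast ((2*π) ^ ((1:ℝ)/2)) n,
      ← Real.rpow_mul (le_of_lt Real.two_pi_pos), ← Real.rpow_add Real.two_pi_pos,
      show -(n:ℝ)/2 + 1/2*(n:ℝ) = 0 by ring, Real.rpow_zero]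
  rw [h1, Finset.sum_congr rfl (fun q _ => by rw [h2 q]), h3]
  calc (2 * π : ℝ) ^ (-(n:ℝ)/2) *
        ((n.factorial : ℝ) *
          ((Real.sqrt (2*π))^n * ∏ j : Fin n, (2*((2*(j:ℕ)+1).factorial : ℝ))))
      = ((2 * π : ℝ) ^ (-(n:ℝ)/2) * (Real.sqrt (2*π))^n) *
          ((n.factorial : ℝ) * ∏ j : Fin n, (2*((2*(j:ℕ)+1).factorial : ℝ))) := by ring
    _ = (n.factorial : ℝ) * ∏ j : Fin n, (2*((2*(j:ℕ)+1).factorial : ℝ)) := by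
        rw [hpow, one_mul]
    _ = ∏ j ∈ range n, ((2 * (j + 1)).factorial : ℝ) := by
        rw [Fin.prod_univ_eq_prod_range (fun j => 2*((2*j+1).factorial : ℝ)) n]
        exact_mod_cast congrArg (fun m : ℕ => (m : ℝ)) (fact_prod_eq n)
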